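/- Every solution y of the ODE x·y'' + (x − n)·y' − n·y = 0 on (0,∞) is of the form y(x) = C₁ e^{−x} + C₂ eₙ(x) for constants C₁, C₂. -/

import Mathlib

noncomputable def e (n : ℕ) (x : ℝ) : ℝ :=
  ∑ l ∈ Finset.range (n + 1), (-1 : ℝ) ^ (n + l) * ((n.factorial : ℝ) / (l.factorial : ℝ)) * x ^ l

lemma const_on_Ioi {f : ℝ → ℝ} (hf : ∀ x ∈ Set.Ioi (0:ℝ), HasDerivAt f 0 x)
    {a b : ℝ} (ha : a ∈ Set.Ioi (0:ℝ)) (hb : b ∈ Set.Ioi (0:ℝ)) : f a = f b := by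
  apply (convex_Ioi (0:ℝ)).is_const_of_fderivWithin_eq_zero (f := f)
    (fun x hx => (hf x hx).differentiableAt.differentiableWithinAt) ?_ ha hb
  intro x hx
  rw [fderivWithin_of_isOpen isOpen_Ioi hx, (hf x hx).hasFDerivAt.fderiv]
  ext; simp

lemma e_hasDerivAt (n : ℕ) (x : ℝ) : HasDerivAt (e n) (x ^ n - e n x) x := by
  have h : HasDerivAt (e n)
      (∑ l ∈ Finset.range (n + 1),
        (-1 : ℝ) ^ (n + l) * ((n.factorial : ℝ) / (l.factorial : ℝ)) * (l * x ^ (l - 1))) x := by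
    apply HasDerivAt.fun_sum
    intro l _
    exact (hasDerivAt_pow l x).const_mul _
  convert h using 1
  rw [Finset.sum_range_succ' _ n]
  have key : ∀ i, (-1 : ℝ) ^ (n + (i+1)) * ((n.factorial : ℝ) / ((i+1).factorial : ℝ))
      * ((i+1 : ℕ) * x ^ ((i+1) - 1))
      = -((-1 : ℝ) ^ (n + i) * ((n.factorial : ℝ) / (i.factorial : ℝ)) * x ^ i) := by
    intro i
    have h1 : ((i+1).factorial : ℝ) = (i+1 : ℝ) * (i.factorial : ℝ) := by
      rw [Nat.factorial_succ]; push_cast; ring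
    have h2 : (i.factorial : ℝ) ≠ 0 := Nat.cast_ne_zero.2 (Nat.factorial_ne_zero i)
    have h3 : (i+1 : ℝ) ≠ 0 := by positivity
    rw [h1]
    have : (n + (i+1)) = (n + i) + 1 := by ring
    rw [this, pow_succ]
    field_simp
    simp only [Nat.add_sub_cancel]; push_cast; ring
  simp only [key]
  have hen : e n x = (∑ i ∈ Finset.range n,
      (-1 : ℝ) ^ (n + i) * ((n.factorial : ℝ) / (i.factorial : ℝ)) * x ^ i) + x ^ n := by
    rw [e, Finset.sum_range_succ]
    congr 1
    have : (-1 : ℝ) ^ (n + n) = 1 := by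
      rw [← two_mul]; exact Even.neg_one_pow ⟨n, two_mul n⟩
    rw [this, div_self (Nat.cast_ne_zero.2 (Nat.factorial_ne_zero n))]; ring
  rw [hen, Finset.sum_neg_distrib]
  push_cast
  ring

theorem stmt16 (n : ℕ) (y : ℝ → ℝ)
    (hy : ∀ x ∈ Set.Ioi (0 : ℝ), DifferentiableAt ℝ y x ∧ DifferentiableAt ℝ (deriv y) x)
    (hode : ∀ x ∈ Set.Ioi (0 : ℝ),
      x * deriv (deriv y) x + (x - (n : ℝ)) * deriv y x - (n : ℝ) * y x = 0) :
    ∃ C₁ C₂ : ℝ, ∀ x ∈ Set.Ioi (0 : ℝ), y x = C₁ * Real.exp (-x) + C₂ * e n x := by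
  set v : ℝ → ℝ := fun x => deriv y x + y x with hv
  have h1 : (1:ℝ) ∈ Set.Ioi (0:ℝ) := by norm_num
  have hvd : ∀ x ∈ Set.Ioi (0:ℝ),
      HasDerivAt v (deriv (deriv y) x + deriv y x) x := by
    intro x hx
    exact ((hy x hx).2.hasDerivAt).add ((hy x hx).1.hasDerivAt)
  have hvode : ∀ x ∈ Set.Ioi (0:ℝ),
      x * (deriv (deriv y) x + deriv y x) = n * v x := by
    intro x hx
    have := hode x hx
    simp only [hv]; nlinarith [this]
  -- g = v / x^n is constant
  have hg : ∀ x ∈ Set.Ioi (0:ℝ), HasDerivAt (fun x => v x / x ^ n) 0 x := by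
    intro x hx
    have hx0 : x ≠ 0 := ne_of_gt hx
    have hxn : x ^ n ≠ 0 := pow_ne_zero n hx0
    have hd : HasDerivAt (fun x => v x / x ^ n)
        (((deriv (deriv y) x + deriv y x) * x ^ n - v x * (n * x ^ (n-1))) / (x ^ n) ^ 2) x :=
      (hvd x hx).div (hasDerivAt_pow n x) hxn
    convert hd using 1
    have key : (deriv (deriv y) x + deriv y x) * x ^ n - v x * (n * x ^ (n-1)) = 0 := by
      cases n with
      | zero => simp only [pow_zero, mul_one, Nat.cast_zero, zero_mul, mul_zero, sub_zero]
                have := hvode x hx; simp at this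
                rcases this with h | h
                · exact absurd h hx0
                · exact h
      | succ m =>
          have hveq := hvode x hx
          simp only [Nat.add_sub_cancel]
          calc (deriv (deriv y) x + deriv y x) * x ^ (m+1) - v x * (↑(m+1) * x ^ m)
              = (x * (deriv (deriv y) x + deriv y x) - ↑(m+1) * v x) * x ^ m := by
                rw [pow_succ' x m]; ring
            _ = 0 := by rw [hveq]; ring
    rw [key]; simp
  have hK : ∀ x ∈ Set.Ioi (0:ℝ), v x = v 1 * x ^ n := by
    intro x hx
    have := const_on_Ioi hg hx h1
    simp only [one_pow, div_one] at this
    rw [div_eq_iff (pow_ne_zero n (ne_of_gt (Set.mem_Ioi.mp hx)))] at this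
    exact this
  set K := v 1 with hKdef
  -- h = (y - K * e n) * exp is constant
  have hh : ∀ x ∈ Set.Ioi (0:ℝ),
      HasDerivAt (fun x => (y x - K * e n x) * Real.exp x) 0 x := by
    intro x hx
    have hd : HasDerivAt (fun x => (y x - K * e n x) * Real.exp x)
        ((deriv y x - K * (x ^ n - e n x)) * Real.exp x
          + (y x - K * e n x) * Real.exp x) x := by
      exact (((hy x hx).1.hasDerivAt).sub ((e_hasDerivAt n x).const_mul K)).mul
        (Real.hasDerivAt_exp x)
    convert hd using 1
    have := hK x hx
    have : deriv y x + y x = K * x ^ n := by rw [← this]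
    nlinarith [this, Real.exp_pos x]
  refine ⟨(y 1 - K * e n 1) * Real.exp 1, K, ?_⟩
  intro x hx
  have hc := const_on_Ioi hh hx h1
  have hex : Real.exp (-x) = (Real.exp x)⁻¹ := Real.exp_neg x
  have hxe : Real.exp x ≠ 0 := (Real.exp_pos x).ne'
  rw [hex]
  field_simp
  nlinarith [hc]
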